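/- Let (A, b) be controllable with A Hurwitz. Then there exists c ∈ ℝ^n such that the scalar transfer function c^T (sI − A)^{-1} b has relative degree one (i.e. the numerator polynomial c^T adj(sI − A) b has degree exactly n−1) and all roots of its numerator polynomial have negative real part (minimum phase). -/
import Mathlib

open Matrix Polynomial

namespace AuxRD1

variable {n : ℕ}

noncomputable def Bc (A : Matrix (Fin n) (Fin n) ℝ) (k : ℕ) : Matrix (Fin n) (Fin n) ℝ :=
  fun i j => ((charmatrix A).adjugate i j).coeff k

lemma Bc_rec (A : Matrix (Fin n) (Fin n) ℝ) (k : ℕ) :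
    Bc A k = A * Bc A (k+1) + (charpoly A).coeff (k+1) • (1 : Matrix (Fin n) (Fin n) ℝ) := by
  ext i j
  have key : X * (charmatrix A).adjugate i j - ∑ l, C (A i l) * (charmatrix A).adjugate l j
      = charpoly A * (if i = j then 1 else 0) := by
    have h := congrFun (congrFun (Matrix.mul_adjugate (charmatrix A)) i) j
    rw [Matrix.mul_apply] at h
    have hd : ∑ l, charmatrix A i l * (charmatrix A).adjugate l j
        = X * (charmatrix A).adjugate i j - ∑ l, C (A i l) * (charmatrix A).adjugate l j := by
      simp only [charmatrix_apply, sub_mul, Finset.sum_sub_distrib]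
      congr 1
      rw [Finset.sum_eq_single i]
      · simp
      · intro l _ hl; simp [Matrix.diagonal_apply_ne' _ hl]
      · simp
    rw [hd] at h
    rw [h]
    simp [Matrix.smul_apply, Matrix.one_apply, Matrix.charpoly, smul_eq_mul]
  have h2 := congrArg (fun p => Polynomial.coeff p (k+1)) key
  simp only [coeff_sub, coeff_X_mul, finset_sum_coeff, coeff_C_mul] at h2
  have h3 : (charpoly A * if i = j then 1 else 0).coeff (k + 1)
      = (charpoly A).coeff (k+1) * (if i = j then (1:ℝ) else 0) := by
    split_ifs <;> simp
  rw [h3] at h2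
  simp only [Bc, Matrix.add_apply, Matrix.mul_apply, Matrix.smul_apply, Matrix.one_apply,
    smul_eq_mul]
  linarith [h2]

end AuxRD1

namespace AuxRD1
open Matrix Polynomial

variable {n : ℕ}

lemma Bc_shift (A : Matrix (Fin n) (Fin n) ℝ) (m : ℕ) :
    ∀ k, n ≤ k → Bc A k = A ^ m * Bc A (k + m) := by
  induction m with
  | zero => simp
  | succ m ih =>
    intro k hk
    have hc : (charpoly A).coeff (k+1) = 0 := by
      apply coeff_eq_zero_of_natDegree_lt
      rw [Matrix.charpoly_natDegree_eq_dim, Fintype.card_fin]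
      omega
    have h1 : Bc A k = A * Bc A (k+1) := by
      rw [Bc_rec, hc, zero_smul, add_zero]
    rw [h1, ih (k+1) (by omega)]
    rw [← Matrix.mul_assoc, ← pow_succ']
    ring_nf

lemma Bc_eventually_zero (A : Matrix (Fin n) (Fin n) ℝ) :
    ∃ D : ℕ, ∀ k, D < k → Bc A k = 0 := by
  refine ⟨Finset.univ.sup (fun ij : Fin n × Fin n => ((charmatrix A).adjugate ij.1 ij.2).natDegree),
    fun k hk => ?_⟩
  ext i j
  show ((charmatrix A).adjugate i j).coeff k = 0
  apply coeff_eq_zero_of_natDegree_lt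
  have hle := Finset.le_sup (f := fun ij : Fin n × Fin n =>
      ((charmatrix A).adjugate ij.1 ij.2).natDegree) (Finset.mem_univ (i, j))
  exact lt_of_le_of_lt hle hk

lemma Bc_zero (A : Matrix (Fin n) (Fin n) ℝ) {k : ℕ} (hk : n ≤ k) : Bc A k = 0 := by
  obtain ⟨D, hD⟩ := Bc_eventually_zero A
  rw [Bc_shift A (D + 1) k hk, hD (k + (D + 1)) (by omega), Matrix.mul_zero]

lemma Bc_formula (A : Matrix (Fin n) (Fin n) ℝ) :
    ∀ j k, k + j = n →
      Bc A k = ∑ m ∈ Finset.range j, (charpoly A).coeff (k + 1 + m) • A ^ m := by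
  intro j
  induction j with
  | zero => intro k hk; simp [Bc_zero A (by omega : n ≤ k)]
  | succ j ih =>
    intro k hk
    rw [Bc_rec, ih (k+1) (by omega), Finset.sum_range_succ', Finset.mul_sum]
    simp only [Matrix.mul_smul, pow_zero]
    congr 1
    · apply Finset.sum_congr rfl
      intro m _
      rw [← pow_succ']
      congr 2
      omega

end AuxRD1

namespace AuxRD1
open Matrix Polynomial

variable {n : ℕ}

noncomputable def Umat (A : Matrix (Fin n) (Fin n) ℝ) : Matrix (Fin n) (Fin n) ℝ :=
  Matrix.of fun j k => (charpoly A).coeff ((k : ℕ) + 1 + (j : ℕ))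

lemma charpoly_coeff_hi (A : Matrix (Fin n) (Fin n) ℝ) {m : ℕ} (hm : n < m) :
    (charpoly A).coeff m = 0 := by
  apply coeff_eq_zero_of_natDegree_lt
  rwa [Matrix.charpoly_natDegree_eq_dim, Fintype.card_fin]

lemma charpoly_coeff_top (A : Matrix (Fin n) (Fin n) ℝ) : (charpoly A).coeff n = 1 := by
  have := Matrix.charpoly_monic A
  have hd : (charpoly A).natDegree = n := by
    rw [Matrix.charpoly_natDegree_eq_dim, Fintype.card_fin]
  have h2 := this.coeff_natDegree
  rwa [hd] at h2

lemma V_eq (A : Matrix (Fin n) (Fin n) ℝ) (b : Fin n → ℝ) :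
    (Matrix.of fun i k : Fin n => (Bc A k *ᵥ b) i)
      = (Matrix.of fun (i j : Fin n) => ((A ^ (j : ℕ)) *ᵥ b) i) * Umat A := by
  ext i k
  have hk : (k : ℕ) + (n - (k : ℕ)) = n := by omega
  rw [Matrix.mul_apply]
  simp only [Matrix.of_apply, Umat]
  rw [Bc_formula A (n - (k : ℕ)) (k : ℕ) hk]
  have hL : ((∑ m ∈ Finset.range (n - (k : ℕ)),
      (charpoly A).coeff ((k : ℕ) + 1 + m) • A ^ m) *ᵥ b) i
      = ∑ m ∈ Finset.range (n - (k : ℕ)),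
        (charpoly A).coeff ((k : ℕ) + 1 + m) * ((A ^ m *ᵥ b) i) := by
    simp only [Matrix.mulVec, dotProduct, Matrix.sum_apply, Finset.sum_apply, Matrix.smul_apply,
      smul_eq_mul, Finset.sum_mul]
    rw [Finset.sum_comm]
    apply Finset.sum_congr rfl
    intro m _
    rw [Finset.mul_sum]
    apply Finset.sum_congr rfl
    intro l _
    ring
  rw [hL]
  rw [Finset.sum_subset (Finset.range_subset_range.mpr (by omega : n - (k : ℕ) ≤ n))]
  · rw [← Fin.sum_univ_eq_sum_range (fun m => (charpoly A).coeff ((k : ℕ) + 1 + m) * ((A ^ m *ᵥ b) i))]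
    apply Finset.sum_congr rfl
    intro j _
    ring
  · intro m _ hm
    simp only [Finset.mem_range, not_lt] at hm
    rw [charpoly_coeff_hi A (by omega), zero_mul]

lemma det_Umat (A : Matrix (Fin n) (Fin n) ℝ) : IsUnit (Umat A).det := by
  set W : Matrix (Fin n) (Fin n) ℝ :=
    Matrix.of fun j k : Fin n => (charpoly A).coeff (n - (k : ℕ) + (j : ℕ)) with hW
  have hWtri : W.BlockTriangular id := by
    intro i j hij
    simp only [id_eq] at hij
    show (charpoly A).coeff (n - (j : ℕ) + (i : ℕ)) = 0
    exact charpoly_coeff_hi A (by omega)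
  have hWdet : W.det = 1 := by
    rw [Matrix.det_of_upperTriangular hWtri]
    have : ∀ i : Fin n, W i i = 1 := by
      intro i
      show (charpoly A).coeff (n - (i : ℕ) + (i : ℕ)) = 1
      have : n - (i : ℕ) + (i : ℕ) = n := by omega
      rw [this, charpoly_coeff_top]
    simp [this]
  have hsub : Umat A = W.submatrix id (Fin.revPerm : Equiv.Perm (Fin n)) := by
    ext j k
    show (charpoly A).coeff ((k : ℕ) + 1 + (j : ℕ))
      = (charpoly A).coeff (n - ((Fin.rev k : Fin n) : ℕ) + (j : ℕ))
    congr 1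
    rw [Fin.val_rev]
    omega
  rw [hsub, Matrix.det_permute']
  simp [hWdet]

end AuxRD1

namespace AuxRD1
open Matrix Polynomial

variable {n : ℕ}

lemma exists_c (A : Matrix (Fin n) (Fin n) ℝ) (b : Fin n → ℝ)
    (hctrb : (Matrix.of fun (i j : Fin n) => ((A ^ (j : ℕ)) *ᵥ b) i).rank = n)
    (q : Fin n → ℝ) :
    ∃ c : Fin n → ℝ, ∀ k : Fin n, ∑ i, c i * (Bc A k *ᵥ b) i = q k := by
  set V : Matrix (Fin n) (Fin n) ℝ := Matrix.of fun i k : Fin n => (Bc A k *ᵥ b) i with hVdef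
  have hV : V.rank = n := by
    rw [hVdef, V_eq A b, Matrix.rank_mul_eq_left_of_isUnit_det _ _ (det_Umat A)]
    exact hctrb
  have hVT : Vᵀ.rank = n := by rw [Matrix.rank_transpose]; exact hV
  have hsurj : Function.Surjective Vᵀ.mulVecLin := by
    rw [← LinearMap.range_eq_top]
    apply Submodule.eq_top_of_finrank_eq
    rw [← Matrix.rank, hVT, Module.finrank_pi, Fintype.card_fin]
  obtain ⟨c, hc⟩ := hsurj q
  refine ⟨c, fun k => ?_⟩
  have := congrFun hc k
  rw [Matrix.mulVecLin_apply, Matrix.mulVec, dotProduct] at this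
  rw [← this]
  apply Finset.sum_congr rfl
  intro i _
  rw [Matrix.transpose_apply]
  show c i * V i k = V i k * c i
  ring

end AuxRD1

open AuxRD1

/-- For a controllable pair `(A, b)` with `A` Hurwitz, there exists an
output vector `c` such that `c^T (sI − A)⁻¹ b` has relative degree one (its numerator
polynomial `c^T adj(sI − A) b` has degree exactly `n − 1`) and is minimum phase (all
complex roots of the numerator have negative real part). -/
theorem exists_relative_degree_one_minimum_phase_output
    {n : ℕ} (hn : 0 < n) (A : Matrix (Fin n) (Fin n) ℝ) (b : Fin n → ℝ)
    (hHurwitz : ∀ z : ℂ, ((charpoly A).map (algebraMap ℝ ℂ)).IsRoot z → z.re < 0)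
    (hctrb : (Matrix.of fun (i j : Fin n) => ((A ^ (j : ℕ)) *ᵥ b) i).rank = n) :
    ∃ c : Fin n → ℝ,
      (∑ i : Fin n, ∑ j : Fin n,
          Polynomial.C (c i) * ((charmatrix A).adjugate i j * Polynomial.C (b j))).degree
        = (n - 1 : ℕ) ∧
      ∀ z : ℂ, (((∑ i : Fin n, ∑ j : Fin n,
          Polynomial.C (c i) * ((charmatrix A).adjugate i j * Polynomial.C (b j)))).map
            (algebraMap ℝ ℂ)).IsRoot z → z.re < 0 := by
  set q : ℝ[X] := (X + C 1) ^ (n - 1) with hq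
  have hqmonic : q.Monic := (monic_X_add_C 1).pow _
  have hqdeg : q.natDegree = n - 1 := by
    rw [hq, natDegree_pow, natDegree_X_add_C, mul_one]
  obtain ⟨c, hc⟩ := exists_c A b hctrb (fun k => q.coeff k)
  refine ⟨c, ?_⟩
  have hN : (∑ i : Fin n, ∑ j : Fin n,
      Polynomial.C (c i) * ((charmatrix A).adjugate i j * Polynomial.C (b j))) = q := by
    ext k
    rw [finset_sum_coeff]
    have hcoeff : ∀ i : Fin n, (∑ j : Fin n,
        Polynomial.C (c i) * ((charmatrix A).adjugate i j * Polynomial.C (b j))).coeff k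
        = c i * (Bc A k *ᵥ b) i := by
      intro i
      rw [finset_sum_coeff, Matrix.mulVec, dotProduct, Finset.mul_sum]
      apply Finset.sum_congr rfl
      intro j _
      rw [coeff_C_mul, coeff_mul_C]
      show c i * (((charmatrix A).adjugate i j).coeff k * b j)
        = c i * (Bc A k i j * b j)
      rfl
    simp only [hcoeff]
    by_cases hk : k < n
    · exact hc ⟨k, hk⟩
    · push_neg at hk
      have hB : Bc A k = 0 := Bc_zero A hk
      have hq0 : q.coeff k = 0 := by
        apply coeff_eq_zero_of_natDegree_lt
        omega
      rw [hB, hq0]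
      simp
  rw [hN]
  constructor
  · rw [Polynomial.degree_eq_natDegree hqmonic.ne_zero, hqdeg]
  · intro z hz
    rw [hq] at hz
    simp only [Polynomial.map_pow, Polynomial.map_add, Polynomial.map_X, Polynomial.map_C,
      IsRoot, eval_pow, eval_add, eval_X, eval_C] at hz
    rcases Nat.eq_zero_or_pos (n - 1) with h0 | hpos
    · rw [h0, pow_zero] at hz
      exact absurd hz one_ne_zero
    · have : z + (algebraMap ℝ ℂ) 1 = 0 := by
        exact pow_eq_zero_iff (by omega) |>.mp hz
      have hz1 : z = -1 := by
        rw [RingHom.map_one] at this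
        linear_combination this
      rw [hz1]
      norm_num
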